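/- arXiv:1302.2766 — 3 statements merged into one kernel-verified Lean document; each statement's English description precedes it below -/
import Mathlib

section
/- Let $g_n(z)=\sum_{k=0}^{n-1} e^{\pi i k^2/n} z^k$ for integers $n\ge 1$. Then $\|g_n\|_4^4 = n^2 - \epsilon_n + 4\sum_{1\le u\le n/2} \left(\frac{\sin(\pi u^2/n)}{\sin(\pi u/n)}\right)^2$, where $\epsilon_n = 2$ if $n\equiv 2\pmod 4$ and $\epsilon_n = 0$ otherwise. -/
open Finset Complex


/-- The polynomial `g_n(z) = ∑_{k=0}^{n-1} e^{π i k²/n} z^k`, as a function on `ℂ`. -/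
noncomputable def gPoly (n : ℕ) (z : ℂ) : ℂ :=
  ∑ k ∈ Finset.range n, Complex.exp (Real.pi * Complex.I * (k : ℂ) ^ 2 / (n : ℂ)) * z ^ k

/-- The fourth power of the `L⁴` norm of `g_n` on the unit circle. -/
noncomputable def gNormFour (n : ℕ) : ℝ :=
  (1 / (2 * Real.pi)) *
    ∫ θ in (0 : ℝ)..(2 * Real.pi), ‖gPoly n (Complex.exp (Complex.I * θ))‖ ^ 4

noncomputable def aC (n k : ℕ) : ℂ := Complex.exp (Real.pi * Complex.I * (k:ℂ)^2 / (n:ℂ))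

noncomputable def corr (n : ℕ) (d : ℤ) : ℂ :=
  ∑ p ∈ (Finset.range n ×ˢ Finset.range n).filter (fun p => (p.1:ℤ) - (p.2:ℤ) = d),
    aC n p.1 * (starRingEnd ℂ) (aC n p.2)

lemma abs_aC (n k : ℕ) : ‖aC n k‖ = 1 := by
  rw [aC, Complex.norm_exp]
  have : (Real.pi * Complex.I * (k:ℂ)^2 / (n:ℂ)).re = 0 := by
    simp [Complex.div_re, Complex.mul_re, Complex.mul_im, pow_two]
  simp [this]

lemma conj_aC (n k : ℕ) : (starRingEnd ℂ) (aC n k) = Complex.exp (-(Real.pi * Complex.I * (k:ℂ)^2 / (n:ℂ))) := by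
  rw [aC, ← Complex.exp_conj]
  congr 1
  simp [map_div₀]
  ring

-- the elementary integral
lemma integral_exp_int (d : ℤ) :
    (∫ θ in (0:ℝ)..(2*Real.pi), Complex.exp ((d:ℂ) * θ * Complex.I)) =
      if d = 0 then (2*Real.pi : ℂ) else 0 := by
  split_ifs with h
  · subst h; simp
  · have hc : (d:ℂ) * Complex.I ≠ 0 := by
      simp [Complex.ext_iff, h]
    have := integral_exp_mul_complex (a := (0:ℝ)) (b := 2*Real.pi) hc
    have heq : ∀ θ : ℝ, (d:ℂ) * θ * Complex.I = (d:ℂ) * Complex.I * θ := by intro θ; ring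
    simp only [heq] at *
    rw [this]
    have : Complex.exp ((d:ℂ) * Complex.I * (2*Real.pi)) = 1 := by
      have := Complex.exp_int_mul_two_pi_mul_I d
      rw [← this]; congr 1; ring
    simp [this]

lemma expand (n : ℕ) (θ : ℝ) :
    gPoly n (Complex.exp (Complex.I * θ)) * (starRingEnd ℂ) (gPoly n (Complex.exp (Complex.I * θ)))
      = ∑ d ∈ Finset.Icc (-(n:ℤ)+1) ((n:ℤ)-1), corr n d * Complex.exp ((d:ℂ) * θ * Complex.I) := by
  have hg : gPoly n (Complex.exp (Complex.I * θ)) = ∑ j ∈ Finset.range n, aC n j * Complex.exp ((j:ℂ) * θ * Complex.I) := by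
    unfold gPoly aC
    refine Finset.sum_congr rfl fun j _ => ?_
    rw [← Complex.exp_nat_mul]
    ring_nf
  have hcg : (starRingEnd ℂ) (gPoly n (Complex.exp (Complex.I * θ))) = ∑ k ∈ Finset.range n, (starRingEnd ℂ) (aC n k) * Complex.exp (-((k:ℂ) * θ * Complex.I)) := by
    rw [hg, map_sum]
    refine Finset.sum_congr rfl fun k _ => ?_
    rw [map_mul, ← Complex.exp_conj]
    congr 1
    simp [Complex.ext_iff]
  rw [hcg, hg, Finset.sum_mul_sum]
  have key : ∀ j k : ℕ, (aC n j * Complex.exp ((j:ℂ)*θ*Complex.I)) * ((starRingEnd ℂ) (aC n k) * Complex.exp (-((k:ℂ)*θ*Complex.I)))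
      = aC n j * (starRingEnd ℂ) (aC n k) * Complex.exp (((((j:ℤ)-(k:ℤ)) : ℤ):ℂ) * θ * Complex.I) := by
    intro j k
    rw [show (((((j:ℤ)-(k:ℤ)) : ℤ)):ℂ) * θ * Complex.I = (j:ℂ)*θ*Complex.I + -((k:ℂ)*θ*Complex.I) by push_cast; ring, Complex.exp_add]
    ring
  simp only [key]
  rw [← Finset.sum_product']
  rw [← Finset.sum_fiberwise_of_maps_to (g := fun p : ℕ × ℕ => (p.1:ℤ) - (p.2:ℤ))
      (t := Finset.Icc (-(n:ℤ)+1) ((n:ℤ)-1)) ?_]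
  · refine Finset.sum_congr rfl fun d _ => ?_
    rw [corr, Finset.sum_mul]
    refine Finset.sum_congr rfl fun p hp => ?_
    simp only [Finset.mem_filter] at hp
    rw [hp.2]
  · intro p hp
    simp only [Finset.mem_product, Finset.mem_range] at hp
    simp only [Finset.mem_Icc]
    omega

lemma corr_neg (n : ℕ) (d : ℤ) : corr n (-d) = (starRingEnd ℂ) (corr n d) := by
  rw [corr, corr, map_sum]
  refine Finset.sum_nbij' (fun p => (p.2, p.1)) (fun p => (p.2, p.1)) ?_ ?_ ?_ ?_ ?_
  · intro p hp; simp only [Finset.mem_filter, Finset.mem_product] at hp ⊢; exact ⟨⟨hp.1.2, hp.1.1⟩, by omega⟩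
  · intro p hp; simp only [Finset.mem_filter, Finset.mem_product] at hp ⊢; exact ⟨⟨hp.1.2, hp.1.1⟩, by omega⟩
  · intro p _; rfl
  · intro p _; rfl
  · intro p _; simp only [map_mul, RingHom.id_apply, Complex.conj_conj]; ring

lemma corr_zero (n : ℕ) : corr n 0 = (n : ℂ) := by
  rw [corr]
  have hset : (Finset.range n ×ˢ Finset.range n).filter (fun p => (p.1:ℤ) - (p.2:ℤ) = 0)
      = (Finset.range n).image (fun k => (k, k)) := by
    ext p
    simp only [Finset.mem_filter, Finset.mem_product, Finset.mem_image, Finset.mem_range]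
    constructor
    · rintro ⟨⟨h1, h2⟩, h3⟩; exact ⟨p.1, h1, by ext <;> simp <;> omega⟩
    · rintro ⟨k, hk, rfl⟩; exact ⟨⟨hk, hk⟩, by omega⟩
  rw [hset, Finset.sum_image (by intro a _ b _ h; simpa using (Prod.mk.injEq _ _ _ _ ▸ h).1)]
  have : ∀ k, aC n k * (starRingEnd ℂ) (aC n k) = 1 := by
    intro k
    rw [Complex.mul_conj]
    norm_cast
    rw [← Complex.sq_norm, abs_aC]; norm_num
  simp [this]

lemma integral_sq (n : ℕ) (hn : 1 ≤ n) :
    (∫ θ in (0:ℝ)..(2*Real.pi),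
        (gPoly n (Complex.exp (Complex.I * θ)) * (starRingEnd ℂ) (gPoly n (Complex.exp (Complex.I * θ))))^2)
    = (2*Real.pi : ℂ) * ∑ d ∈ Finset.Icc (-(n:ℤ)+1) ((n:ℤ)-1), corr n d * corr n (-d) := by
  set D := Finset.Icc (-(n:ℤ)+1) ((n:ℤ)-1) with hD
  have h1 : ∀ θ : ℝ, (gPoly n (Complex.exp (Complex.I * θ)) * (starRingEnd ℂ) (gPoly n (Complex.exp (Complex.I * θ))))^2
      = ∑ d ∈ D, ∑ e ∈ D, corr n d * corr n e * Complex.exp (((d+e : ℤ):ℂ) * θ * Complex.I) := by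
    intro θ
    rw [expand, sq, Finset.sum_mul_sum]
    refine Finset.sum_congr rfl fun d _ => Finset.sum_congr rfl fun e _ => ?_
    rw [show (((d+e : ℤ)):ℂ) * θ * Complex.I = (d:ℂ)*θ*Complex.I + (e:ℂ)*θ*Complex.I by push_cast; ring,
      Complex.exp_add]
    ring
  simp only [h1]
  rw [intervalIntegral.integral_finset_sum (fun d _ => ?_)]
  swap
  · apply Continuous.intervalIntegrable
    fun_prop
  have h2 : ∀ d ∈ D, (∫ θ in (0:ℝ)..(2*Real.pi),
      ∑ e ∈ D, corr n d * corr n e * Complex.exp (((d+e : ℤ):ℂ) * θ * Complex.I))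
      = (2*Real.pi : ℂ) * (corr n d * corr n (-d)) := by
    intro d hd
    rw [intervalIntegral.integral_finset_sum (fun e _ => Continuous.intervalIntegrable (by fun_prop) _ _)]
    have h3 : ∀ e ∈ D, (∫ θ in (0:ℝ)..(2*Real.pi), corr n d * corr n e * Complex.exp (((d+e : ℤ):ℂ) * θ * Complex.I))
        = if e = -d then (2*Real.pi : ℂ) * (corr n d * corr n (-d)) else 0 := by
      intro e _
      rw [intervalIntegral.integral_const_mul, integral_exp_int]
      by_cases h : e = -d
      · subst h; simp [mul_comm]
      · rw [if_neg (by omega), if_neg h, mul_zero]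
    rw [Finset.sum_congr rfl h3, Finset.sum_ite_eq' D (-d)]
    rw [if_pos]
    simp only [hD, Finset.mem_Icc] at hd ⊢
    omega
  rw [Finset.sum_congr rfl h2, ← Finset.mul_sum]

lemma gNormFour_eq_sum (n : ℕ) (hn : 1 ≤ n) :
    gNormFour n = ∑ d ∈ Finset.Icc (-(n:ℤ)+1) ((n:ℤ)-1), (‖corr n d‖)^2 := by
  have hpt : ∀ θ : ℝ, (((‖gPoly n (Complex.exp (Complex.I * θ))‖)^4 : ℝ) : ℂ)
      = (gPoly n (Complex.exp (Complex.I * θ)) * (starRingEnd ℂ) (gPoly n (Complex.exp (Complex.I * θ))))^2 := by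
    intro θ
    rw [Complex.mul_conj]
    norm_cast
    rw [← Complex.sq_norm]
    ring
  have hofreal : ((∫ θ in (0:ℝ)..(2*Real.pi), (‖gPoly n (Complex.exp (Complex.I * θ))‖)^4 : ℝ) : ℂ)
      = (2*Real.pi:ℂ) * ∑ d ∈ Finset.Icc (-(n:ℤ)+1) ((n:ℤ)-1), corr n d * corr n (-d) := by
    rw [← intervalIntegral.integral_ofReal]
    simp only [hpt]
    exact integral_sq n hn
  have hc : ∀ d : ℤ, corr n d * corr n (-d) = (((‖corr n d‖)^2 : ℝ) : ℂ) := by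
    intro d
    rw [corr_neg, Complex.mul_conj, Complex.sq_norm]
  rw [Finset.sum_congr rfl (fun d _ => hc d)] at hofreal
  have : (∫ θ in (0:ℝ)..(2*Real.pi), (‖gPoly n (Complex.exp (Complex.I * θ))‖)^4 : ℝ)
      = 2*Real.pi * ∑ d ∈ Finset.Icc (-(n:ℤ)+1) ((n:ℤ)-1), (‖corr n d‖)^2 := by
    have := hofreal
    push_cast at this
    exact_mod_cast this
  rw [gNormFour, this]
  have hπ : (2 * Real.pi) ≠ 0 := by positivity
  field_simp

lemma abs_exp_mul_I_sub_one (y : ℝ) :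
    ‖Complex.exp ((y:ℂ) * Complex.I) - 1‖ = 2 * |Real.sin (y/2)| := by
  have hsq : ‖Complex.exp ((y:ℂ) * Complex.I) - 1‖ ^ 2 = (2 * |Real.sin (y/2)|)^2 := by
    rw [Complex.sq_norm, Complex.normSq_apply]
    simp only [Complex.sub_re, Complex.sub_im, Complex.one_re, Complex.one_im,
      Complex.exp_ofReal_mul_I_re, Complex.exp_ofReal_mul_I_im]
    have h1 : Real.cos y = 1 - 2 * Real.sin (y/2)^2 := by
      have hc := Real.cos_sq (y/2)
      rw [show 2*(y/2) = y by ring] at hc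
      have h2 := Real.sin_sq_add_cos_sq (y/2)
      nlinarith
    rw [mul_pow, _root_.sq_abs]
    nlinarith [Real.sin_sq_add_cos_sq y]
  have h1 : (0:ℝ) ≤ ‖Complex.exp ((y:ℂ) * Complex.I) - 1‖ := norm_nonneg _
  have h2 : (0:ℝ) ≤ 2 * |Real.sin (y/2)| := by positivity
  nlinarith

lemma corr_nat (n h : ℕ) (hh : h < n) :
    corr n (h:ℤ) = ∑ k ∈ Finset.range (n - h), aC n (k+h) * (starRingEnd ℂ) (aC n k) := by
  rw [corr]
  refine Finset.sum_nbij' (fun p => p.2) (fun k => (k+h, k)) ?_ ?_ ?_ ?_ ?_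
  · intro p hp
    simp only [Finset.mem_filter, Finset.mem_product, Finset.mem_range] at hp ⊢
    omega
  · intro k hk
    simp only [Finset.mem_filter, Finset.mem_product, Finset.mem_range] at hk ⊢
    constructor
    · omega
    · push_cast; ring
  · intro p hp
    simp only [Finset.mem_filter, Finset.mem_product, Finset.mem_range] at hp
    have : p.1 = p.2 + h := by omega
    ext <;> simp [this]
  · intro k _; rfl
  · intro p hp
    simp only [Finset.mem_filter, Finset.mem_product, Finset.mem_range] at hp
    have : p.1 = p.2 + h := by omega
    rw [this]

lemma term_eq (n h k : ℕ) (hn : n ≠ 0) :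
    aC n (k+h) * (starRingEnd ℂ) (aC n k)
      = aC n h * (Complex.exp (2*Real.pi*Complex.I*(h:ℂ)/(n:ℂ)))^k := by
  rw [conj_aC, aC, aC, ← Complex.exp_nat_mul, ← Complex.exp_add, ← Complex.exp_add]
  congr 1
  have hn' : (n:ℂ) ≠ 0 := Nat.cast_ne_zero.mpr hn
  field_simp
  push_cast
  ring

lemma exp_ne_one (n h : ℕ) (h1 : 1 ≤ h) (h2 : h < n) :
    Complex.exp (2*Real.pi*Complex.I*(h:ℂ)/(n:ℂ)) ≠ 1 := by
  intro hc
  rw [Complex.exp_eq_one_iff] at hc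
  obtain ⟨m, hm⟩ := hc
  have hn' : (n:ℂ) ≠ 0 := Nat.cast_ne_zero.mpr (by omega)
  have hπ : (Real.pi:ℂ) ≠ 0 := by exact_mod_cast Real.pi_ne_zero
  have h2π : (2:ℂ) * Real.pi * Complex.I ≠ 0 :=
    mul_ne_zero (mul_ne_zero two_ne_zero hπ) Complex.I_ne_zero
  have hm' : (2*(Real.pi:ℂ)*Complex.I) * (h:ℂ) = (2*(Real.pi:ℂ)*Complex.I) * ((m:ℂ)*(n:ℂ)) := by
    field_simp at hm
    linear_combination (2*(Real.pi:ℂ)*Complex.I) * hm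
  have key : (h:ℂ) = (m:ℂ)*(n:ℂ) := mul_left_cancel₀ h2π hm'
  have keyz : (h:ℤ) = m * (n:ℤ) := by exact_mod_cast key
  have h1' : (1:ℤ) ≤ (h:ℤ) := by exact_mod_cast h1
  have h2' : (h:ℤ) < (n:ℤ) := by exact_mod_cast h2
  have hn0 : (0:ℤ) < (n:ℤ) := by exact_mod_cast Nat.pos_of_ne_zero (by omega)
  rcases le_or_gt m 0 with hm0 | hm0
  · nlinarith
  · nlinarith

lemma abs_corr_sq (n h : ℕ) (h1 : 1 ≤ h) (h2 : h < n) :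
    (‖corr n (h:ℤ)‖)^2
      = (Real.sin (Real.pi * (h:ℝ)^2 / n) / Real.sin (Real.pi * (h:ℝ) / n))^2 := by
  have hn : n ≠ 0 := by omega
  have hn' : (n:ℝ) ≠ 0 := Nat.cast_ne_zero.mpr hn
  set x := Complex.exp (2*Real.pi*Complex.I*(h:ℂ)/(n:ℂ)) with hx
  have hcorr : corr n (h:ℤ) = aC n h * ((x^(n-h) - 1)/(x - 1)) := by
    rw [corr_nat n h h2, Finset.sum_congr rfl (fun k _ => term_eq n h k hn), ← Finset.mul_sum,
      geom_sum_eq (exp_ne_one n h h1 h2)]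
  have hxy : x = Complex.exp (((2*Real.pi*(h:ℝ)/n : ℝ) : ℂ) * Complex.I) := by
    rw [hx]; congr 1; push_cast; ring
  have hxN : x^(n-h) = Complex.exp (((2*Real.pi*(h:ℝ)*((n:ℝ)-(h:ℝ))/n : ℝ) : ℂ) * Complex.I) := by
    rw [hxy, ← Complex.exp_nat_mul]; congr 1
    push_cast [Nat.cast_sub h2.le]
    ring
  have habs : ‖corr n (h:ℤ)‖
      = |Real.sin (Real.pi*(h:ℝ)*((n:ℝ)-(h:ℝ))/n)| / |Real.sin (Real.pi*(h:ℝ)/n)| := by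
    rw [hcorr, norm_mul, abs_aC, one_mul, norm_div, hxN, hxy,
      abs_exp_mul_I_sub_one, abs_exp_mul_I_sub_one,
      show (2*Real.pi*(h:ℝ)*((n:ℝ)-(h:ℝ))/n)/2 = Real.pi*(h:ℝ)*((n:ℝ)-(h:ℝ))/n by ring,
      show (2*Real.pi*(h:ℝ)/n)/2 = Real.pi*(h:ℝ)/n by ring,
      mul_div_mul_left _ _ (two_ne_zero)]
  have hA : |Real.sin (Real.pi*(h:ℝ)*((n:ℝ)-(h:ℝ))/n)| = |Real.sin (Real.pi*(h:ℝ)^2/n)| := by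
    rw [show Real.pi*(h:ℝ)*((n:ℝ)-(h:ℝ))/n = (h:ℝ)*Real.pi - Real.pi*(h:ℝ)^2/n by
      field_simp]
    rw [Real.sin_nat_mul_pi_sub, _root_.abs_neg, _root_.abs_mul, _root_.abs_pow, _root_.abs_neg, _root_.abs_one, one_pow, one_mul]
  rw [habs, hA, div_pow, _root_.sq_abs, _root_.sq_abs, ← div_pow]

lemma sum_Icc_symm (m : ℕ) (f : ℤ → ℝ) (hf : ∀ d : ℤ, f (-d) = f d) :
    ∑ d ∈ Finset.Icc (-(m:ℤ)) (m:ℤ), f d = f 0 + 2 * ∑ h ∈ Finset.Icc (1:ℤ) (m:ℤ), f h := by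
  have hsplit : Finset.Icc (-(m:ℤ)) (m:ℤ) = Finset.Icc (-(m:ℤ)) (-1) ∪ Finset.Icc 0 (m:ℤ) := by
    ext d; simp only [Finset.mem_union, Finset.mem_Icc]; omega
  have hdisj : Disjoint (Finset.Icc (-(m:ℤ)) (-1)) (Finset.Icc 0 (m:ℤ)) := by
    simp only [Finset.disjoint_left, Finset.mem_Icc]
    intro a h1 h2; omega
  rw [hsplit, Finset.sum_union hdisj]
  have hneg : ∑ d ∈ Finset.Icc (-(m:ℤ)) (-1), f d = ∑ h ∈ Finset.Icc (1:ℤ) (m:ℤ), f h := by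
    refine Finset.sum_nbij' (fun d => -d) (fun h => -h) ?_ ?_ ?_ ?_ ?_
    · intro d hd; simp only [Finset.mem_Icc] at hd ⊢; omega
    · intro h hh; simp only [Finset.mem_Icc] at hh ⊢; omega
    · intro d _; ring
    · intro h _; ring
    · intro d _; rw [← hf d]
  have h0 : Finset.Icc (0:ℤ) (m:ℤ) = insert 0 (Finset.Icc 1 (m:ℤ)) := by
    ext d; simp only [Finset.mem_insert, Finset.mem_Icc]; omega
  rw [hneg, h0, Finset.sum_insert (by simp)]
  ring

lemma gNormFour_eq (n : ℕ) (hn : 1 ≤ n) :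
    gNormFour n = (n:ℝ)^2 + 2 * ∑ h ∈ Finset.Icc 1 (n-1),
      (Real.sin (Real.pi * (h:ℝ)^2 / n) / Real.sin (Real.pi * (h:ℝ) / n))^2 := by
  rw [gNormFour_eq_sum n hn]
  have hD : Finset.Icc (-(n:ℤ)+1) ((n:ℤ)-1) = Finset.Icc (-((n-1:ℕ):ℤ)) ((n-1:ℕ):ℤ) := by
    congr 1 <;> · push_cast [Nat.cast_sub hn]; ring
  have hf : ∀ d : ℤ, (‖corr n (-d)‖)^2 = (‖corr n d‖)^2 := by
    intro d; rw [corr_neg]; simp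
  rw [hD, sum_Icc_symm (n-1) _ hf, corr_zero]
  have h0 : (‖(n:ℂ)‖)^2 = (n:ℝ)^2 := by
    simp
  have hsum : ∑ h ∈ Finset.Icc (1:ℤ) ((n-1:ℕ):ℤ), (‖corr n h‖)^2
      = ∑ h ∈ Finset.Icc 1 (n-1),
        (Real.sin (Real.pi * (h:ℝ)^2 / n) / Real.sin (Real.pi * (h:ℝ) / n))^2 := by
    refine Finset.sum_nbij' (fun d => d.toNat) (fun h => (h:ℤ)) ?_ ?_ ?_ ?_ ?_
    · intro d hd; simp only [Finset.mem_Icc] at hd ⊢; omega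
    · intro h hh; simp only [Finset.mem_Icc] at hh ⊢; omega
    · intro d hd; simp only [Finset.mem_Icc] at hd; show ((d.toNat:ℕ):ℤ) = d; omega
    · intro h hh; simp only [Finset.mem_Icc] at hh; show ((h:ℤ)).toNat = h; omega
    · intro d hd
      simp only [Finset.mem_Icc] at hd
      have h1 : 1 ≤ d.toNat := by omega
      have h2 : d.toNat < n := by omega
      have hd' : d = ((d.toNat : ℕ) : ℤ) := by omega
      rw [hd', abs_corr_sq n d.toNat h1 h2]; simp only [Int.toNat_natCast]
  rw [h0, hsum]

lemma rearrange (n : ℕ) (hn : 1 ≤ n) (T : ℕ → ℝ)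
    (hsymm : ∀ h, 1 ≤ h → h < n → T (n - h) = T h)
    (hmid : n % 2 = 0 → T (n/2) = if n % 4 = 2 then 1 else 0) :
    (2:ℝ) * ∑ h ∈ Finset.Icc 1 (n-1), T h
      = -(if n % 4 = 2 then (2:ℝ) else 0) + 4 * ∑ u ∈ Finset.Icc 1 (n/2), T u := by
  have hsplit : Finset.Icc 1 (n-1) = Finset.Icc 1 (n/2) ∪ Finset.Icc (n/2+1) (n-1) := by
    ext h; simp only [Finset.mem_union, Finset.mem_Icc]; omega
  have hdisj : Disjoint (Finset.Icc 1 (n/2)) (Finset.Icc (n/2+1) (n-1)) := by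
    simp only [Finset.disjoint_left, Finset.mem_Icc]; intro a h1 h2; omega
  have hre : ∑ h ∈ Finset.Icc (n/2+1) (n-1), T h = ∑ u ∈ Finset.Icc 1 (n - n/2 - 1), T u := by
    refine Finset.sum_nbij' (fun h => n - h) (fun u => n - u) ?_ ?_ ?_ ?_ ?_
    · intro h hh; simp only [Finset.mem_Icc] at hh ⊢; omega
    · intro u hu; simp only [Finset.mem_Icc] at hu ⊢; omega
    · intro h hh; simp only [Finset.mem_Icc] at hh; show n - (n - h) = h; omega
    · intro u hu; simp only [Finset.mem_Icc] at hu; show n - (n - u) = u; omega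
    · intro h hh
      simp only [Finset.mem_Icc] at hh
      exact (hsymm h (by omega) (by omega)).symm
  rw [hsplit, Finset.sum_union hdisj, hre]
  rcases Nat.even_or_odd n with he | ho
  · have h2 : n % 2 = 0 := Nat.even_iff.mp he
    have hhalf : n - n/2 - 1 = n/2 - 1 := by omega
    have hins : Finset.Icc 1 (n/2) = insert (n/2) (Finset.Icc 1 (n/2-1)) := by
      ext u; simp only [Finset.mem_insert, Finset.mem_Icc]; omega
    rw [hhalf, hins, Finset.sum_insert (by simp only [Finset.mem_Icc]; omega)]
    have hT := hmid h2
    split_ifs at hT ⊢ with h4 <;> rw [hT] <;> ring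
  · have h2 : n % 2 = 1 := Nat.odd_iff.mp ho
    rw [show n - n/2 - 1 = n/2 by omega, if_neg (by omega)]
    ring

lemma Tsymm (n h : ℕ) (h1 : 1 ≤ h) (h2 : h < n) :
    (Real.sin (Real.pi * (((n-h:ℕ)):ℝ)^2 / n) / Real.sin (Real.pi * (((n-h:ℕ)):ℝ) / n))^2
      = (Real.sin (Real.pi * (h:ℝ)^2 / n) / Real.sin (Real.pi * (h:ℝ) / n))^2 := by
  have hn' : (n:ℝ) ≠ 0 := Nat.cast_ne_zero.mpr (by omega)
  rw [Nat.cast_sub h2.le]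
  have hden : Real.pi * ((n:ℝ)-(h:ℝ)) / n = Real.pi - Real.pi * (h:ℝ)/n := by
    field_simp
  have hnum : Real.pi * ((n:ℝ)-(h:ℝ))^2 / n
      = Real.pi * (h:ℝ)^2/n + (((n:ℤ) - 2*(h:ℤ) : ℤ):ℝ) * Real.pi := by
    push_cast; field_simp; ring
  rw [hden, hnum, Real.sin_pi_sub, Real.sin_add_int_mul_pi, div_pow, div_pow, mul_pow]
  rw [show ((-1:ℝ)^((n:ℤ)-2*(h:ℤ)))^2 = 1 by
    rw [← _root_.sq_abs]
    rcases Int.even_or_odd ((n:ℤ)-2*(h:ℤ)) with hev | hod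
    · rw [hev.neg_one_zpow]; norm_num
    · rw [Odd.neg_one_zpow hod]; norm_num]
  rw [one_mul]

lemma Tmid (n : ℕ) (hn : 1 ≤ n) (h2 : n % 2 = 0) :
    (Real.sin (Real.pi * (((n/2:ℕ)):ℝ)^2 / n) / Real.sin (Real.pi * (((n/2:ℕ)):ℝ) / n))^2
      = if n % 4 = 2 then (1:ℝ) else 0 := by
  obtain ⟨m, rfl⟩ : ∃ m, n = 2*m := ⟨n/2, by omega⟩
  have hm : 1 ≤ m := by omega
  have hm' : (m:ℝ) ≠ 0 := Nat.cast_ne_zero.mpr (by omega)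
  rw [show (2*m)/2 = m from by omega]
  have hden : Real.pi * (m:ℝ) / ((2*m : ℕ):ℝ) = Real.pi / 2 := by
    push_cast; field_simp
  have hnum : Real.pi * (m:ℝ)^2 / ((2*m : ℕ):ℝ) = (m:ℝ) * Real.pi / 2 := by
    push_cast; field_simp
  rw [hden, hnum, Real.sin_pi_div_two, div_one]
  rcases Nat.even_or_odd m with hme | hmo
  · obtain ⟨t, rfl⟩ := hme
    rw [show ((t+t:ℕ):ℝ)*Real.pi/2 = (t:ℝ)*Real.pi by push_cast; ring,
      Real.sin_nat_mul_pi, if_neg (by omega)]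
    norm_num
  · obtain ⟨t, rfl⟩ := hmo
    rw [show ((2*t+1:ℕ):ℝ)*Real.pi/2 = (t:ℝ)*Real.pi + Real.pi/2 by push_cast; ring,
      if_pos (by omega), Real.sin_add, Real.sin_nat_mul_pi, Real.sin_pi_div_two,
      Real.cos_pi_div_two]
    have habs : |Real.cos ((t:ℝ)*Real.pi)| = 1 := by
      have := Real.abs_cos_int_mul_pi (t:ℤ)
      push_cast at this
      exact this
    rw [zero_mul, zero_add, mul_one, ← _root_.sq_abs, habs]
    norm_num


/-- `‖g_n‖₄⁴ = n² - ε_n + 4 ∑_{1 ≤ u ≤ n/2} (sin(π u²/n)/sin(π u/n))²`, where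
`ε_n = 2` for `n ≡ 2 (mod 4)` and `ε_n = 0` otherwise. -/
theorem gNormFour_formula (n : ℕ) (hn : 1 ≤ n) :
    gNormFour n =
      (n : ℝ) ^ 2 - (if n % 4 = 2 then (2 : ℝ) else 0) +
        4 * ∑ u ∈ Finset.Icc 1 (n / 2),
          (Real.sin (Real.pi * (u : ℝ) ^ 2 / n) / Real.sin (Real.pi * (u : ℝ) / n)) ^ 2 := by
  rw [gNormFour_eq n hn]
  have key := rearrange n hn
    (fun u => (Real.sin (Real.pi * (u:ℝ)^2 / n) / Real.sin (Real.pi * (u:ℝ)/n))^2)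
    (fun h h1 h2 => Tsymm n h h1 h2)
    (fun h2 => Tmid n hn h2)
  simp only at key
  linarith [key]
end

section
/- Let $n\ge 1$ be an integer and let $a_k = e^{\pi i k^2/n}$ for $0\le k\le n-1$. Then for every integer $u$ with $1\le u\le n-1$, the aperiodic autocorrelation $c_u = \sum_{j=0}^{n-1-u} a_j\overline{a_{j+u}}$ satisfies $|c_u| = \left|\frac{\sin(\pi u^2/n)}{\sin(\pi u/n)}\right|$. -/
lemma chu_abs_exp_mul_I_sub_one (t : ℝ) :
    ‖Complex.exp (t * Complex.I) - 1‖ = 2 * |Real.sin (t / 2)| := by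
  rw [Complex.norm_def, Complex.normSq_apply]
  simp only [Complex.sub_re, Complex.sub_im, Complex.one_re, Complex.one_im,
    Complex.exp_ofReal_mul_I_re, Complex.exp_ofReal_mul_I_im, sub_zero]
  rw [Real.abs_sin_half]
  have hc1 : Real.cos t ≤ 1 := Real.cos_le_one t
  have h4 : (Real.cos t - 1) * (Real.cos t - 1) + Real.sin t * Real.sin t
      = (2 * Real.sqrt ((1 - Real.cos t) / 2)) ^ 2 := by
    rw [mul_pow, Real.sq_sqrt (by linarith)]
    nlinarith [Real.sin_sq_add_cos_sq t]
  rw [h4, Real.sqrt_sq (by positivity)]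

/-- For `a_k = e^{π i k²/n}` and `1 ≤ u ≤ n-1`, the aperiodic autocorrelation
`c_u = ∑_{j=0}^{n-1-u} a_j conj(a_{j+u})` satisfies `|c_u| = |sin(π u²/n)/sin(π u/n)|`. -/
theorem chu_autocorrelation_abs (n : ℕ) (hn : 1 ≤ n) (u : ℕ) (hu1 : 1 ≤ u) (hu2 : u ≤ n - 1) :
    ‖(∑ j ∈ Finset.range (n - u),
        Complex.exp (Real.pi * Complex.I * (j : ℂ) ^ 2 / (n : ℂ)) *
          (starRingEnd ℂ) (Complex.exp (Real.pi * Complex.I * ((j : ℂ) + u) ^ 2 / (n : ℂ))))‖ =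
      |Real.sin (Real.pi * (u : ℝ) ^ 2 / n) / Real.sin (Real.pi * (u : ℝ) / n)| := by
  have hun : u < n := by omega
  have hn0 : (n : ℂ) ≠ 0 := Nat.cast_ne_zero.mpr (by omega)
  have hnR : (0:ℝ) < n := by exact_mod_cast Nat.lt_of_lt_of_le Nat.zero_lt_one hn
  have huR : (0:ℝ) < u := by exact_mod_cast hu1
  have hunR : (u:ℝ) < n := by exact_mod_cast hun
  set A : ℝ := Real.pi * u ^ 2 / n with hA
  set B : ℝ := 2 * Real.pi * u / n with hB
  set m : ℕ := n - u with hm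
  have hmn : (m : ℝ) = (n : ℝ) - u := by
    rw [hm]; push_cast [Nat.cast_sub hun.le]; ring
  have hterm : ∀ j ∈ Finset.range m,
      Complex.exp (Real.pi * Complex.I * (j : ℂ) ^ 2 / (n : ℂ)) *
        (starRingEnd ℂ) (Complex.exp (Real.pi * Complex.I * ((j : ℂ) + u) ^ 2 / (n : ℂ)))
      = Complex.exp ((-A : ℝ) * Complex.I) * Complex.exp ((-B : ℝ) * Complex.I) ^ j := by
    intro j _
    have hc : (starRingEnd ℂ) (Complex.exp (Real.pi * Complex.I * ((j : ℂ) + u) ^ 2 / (n : ℂ)))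
        = Complex.exp (-(Real.pi * Complex.I * ((j : ℂ) + u) ^ 2 / (n : ℂ))) := by
      rw [← Complex.exp_conj]
      congr 1
      simp only [map_div₀, map_mul, map_pow, map_add, Complex.conj_I, Complex.conj_ofReal,
        map_natCast]
      ring
    rw [hc, ← Complex.exp_add, ← Complex.exp_nat_mul, ← Complex.exp_add]
    congr 1
    rw [hA, hB]
    push_cast
    field_simp
    ring
  rw [Finset.sum_congr rfl hterm, ← Finset.mul_sum]
  have hz : Complex.exp ((-B : ℝ) * Complex.I) ≠ 1 := by
    intro hone
    rw [Complex.exp_eq_one_iff] at hone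
    obtain ⟨k, hk⟩ := hone
    have hk' : ((-B : ℝ) : ℂ) * Complex.I = ((k * (2 * Real.pi) : ℝ) : ℂ) * Complex.I := by
      push_cast at hk ⊢
      linear_combination hk
    have h2 : (-B : ℝ) = k * (2 * Real.pi) :=
      Complex.ofReal_inj.mp (mul_right_cancel₀ Complex.I_ne_zero hk')
    have hpi := Real.pi_pos
    have hkn : (u : ℝ) = ((-k : ℤ) : ℝ) * n := by
      rw [hB] at h2
      push_cast
      field_simp at h2
      nlinarith
    have h0 : (0:ℤ) < -k := by
      have : (0:ℝ) < ((-k : ℤ) : ℝ) := by nlinarith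
      exact_mod_cast this
    have h1 : (-k:ℤ) < 1 := by
      have : ((-k : ℤ) : ℝ) < 1 := by nlinarith
      exact_mod_cast this
    omega
  rw [geom_sum_eq hz, norm_mul, Complex.norm_exp_ofReal_mul_I, one_mul, norm_div,
    ← Complex.exp_nat_mul,
    show ((m : ℂ) * (((-B : ℝ) : ℂ) * Complex.I)) = (((m : ℝ) * -B : ℝ) : ℂ) * Complex.I by
      push_cast; ring,
    chu_abs_exp_mul_I_sub_one, chu_abs_exp_mul_I_sub_one]
  have h1 : |Real.sin ((m : ℝ) * -B / 2)| = |Real.sin A| := by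
    have he : (m : ℝ) * -B / 2 = -((u : ℝ) * Real.pi - A) := by
      rw [hmn, hA, hB]; field_simp
    rw [he, Real.sin_neg, abs_neg, Real.sin_nat_mul_pi_sub, abs_neg, abs_mul, abs_pow,
      abs_neg, abs_one, one_pow, one_mul]
  have h2 : |Real.sin (-B / 2)| = |Real.sin (Real.pi * u / n)| := by
    have he : -B / 2 = -(Real.pi * u / n) := by rw [hB]; ring
    rw [he, Real.sin_neg, abs_neg]
  rw [h1, h2, abs_div, mul_div_mul_left _ _ (two_ne_zero)]
end

section
/- Define $p(y) = \frac{y - \sin y\cos y}{(\sin y)^2}$ for $0 < y \le \pi/2$. Then: (i) $-3 < p'(y) \le 2$ for all $0 < y \le \pi/2$; (ii) $\lim_{y\to 0^+} p(y) = 0$; and (iii) $\int_0^{\pi/2} p(y)\,dy = 1$. -/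
open Real Set Filter intervalIntegral
open scoped Topology

/-- `p(y) = (y - sin y cos y)/(sin y)²`.  (At `y = 0` this formula evaluates to `0` in Lean,
which agrees with the continuous extension.) -/
noncomputable def pFun (y : ℝ) : ℝ :=
  (y - Real.sin y * Real.cos y) / (Real.sin y) ^ 2

/-- basic facts on `(0, π/2]` -/
lemma pFun_basic {y : ℝ} (hy : 0 < y) (hy2 : y ≤ Real.pi / 2) :
    0 < Real.sin y ∧ 0 ≤ Real.cos y ∧ y * Real.cos y ≤ Real.sin y ∧
      Real.sin y * Real.cos y ≤ y := by
  have hyπ : y < Real.pi := lt_of_le_of_lt hy2 (by linarith [Real.pi_pos])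
  have hs : 0 < Real.sin y := Real.sin_pos_of_pos_of_lt_pi hy hyπ
  have hc : 0 ≤ Real.cos y := Real.cos_nonneg_of_mem_Icc ⟨by linarith, hy2⟩
  refine ⟨hs, hc, ?_, ?_⟩
  · rcases lt_or_eq_of_le hy2 with h | h
    · have ht : y < Real.tan y := Real.lt_tan hy h
      have hc' : 0 < Real.cos y := Real.cos_pos_of_mem_Ioo ⟨by linarith, h⟩
      rw [Real.tan_eq_sin_div_cos] at ht
      calc y * Real.cos y ≤ (Real.sin y / Real.cos y) * Real.cos y := by
            exact mul_le_mul_of_nonneg_right ht.le hc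
        _ = Real.sin y := by field_simp
    · subst h; simp [Real.cos_pi_div_two]
  · have := Real.sin_le (by linarith : (0:ℝ) ≤ 2 * y)
    have h2 : Real.sin (2 * y) = 2 * Real.sin y * Real.cos y := Real.sin_two_mul y
    nlinarith

lemma pFun_hasDerivAt {y : ℝ} (hs : Real.sin y ≠ 0) :
    HasDerivAt pFun
      ((2 * Real.sin y ^ 2 * Real.sin y ^ 2 -
        (y - Real.sin y * Real.cos y) * (2 * Real.sin y * Real.cos y)) /
        (Real.sin y ^ 2) ^ 2) y := by
  have h1 : HasDerivAt (fun x => x - Real.sin x * Real.cos x)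
      (1 - (Real.cos y * Real.cos y + Real.sin y * -Real.sin y)) y :=
    (hasDerivAt_id y).sub ((Real.hasDerivAt_sin y).mul (Real.hasDerivAt_cos y))
  have h2 : HasDerivAt (fun x => Real.sin x ^ 2)
      ((2 : ℕ) * Real.sin y ^ 1 * Real.cos y) y := (Real.hasDerivAt_sin y).pow 2
  have h3 := h1.div h2 (pow_ne_zero 2 hs)
  refine h3.congr_deriv ?_
  symm
  have := Real.sin_sq_add_cos_sq y
  field_simp
  ring_nf
  nlinarith [Real.sin_sq_add_cos_sq y, congrArg (fun t => Real.sin y * t) this]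

/-- Part (ii). -/
lemma pFun_tendsto_zero :
    Filter.Tendsto pFun (nhdsWithin 0 (Set.Ioi 0)) (nhds 0) := by
  have hb : ∀ y : ℝ, 0 < y → y < 1/2 → 0 ≤ pFun y ∧ pFun y ≤ 2 * y := by
    intro y hy hy'
    have hy2 : y ≤ Real.pi / 2 := by nlinarith [Real.pi_gt_three]
    obtain ⟨hs, hc, _, hsc⟩ := pFun_basic hy hy2
    constructor
    · apply div_nonneg (by linarith) (by positivity)
    · have hnum : y - Real.sin y * Real.cos y < y ^ 3 := by
        have h := Real.sin_gt_sub_cube (by linarith : 0 < 2*y)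
        have h2 : Real.sin (2 * y) = 2 * Real.sin y * Real.cos y := Real.sin_two_mul y
        nlinarith
      have hden : y ^ 2 / 2 ≤ Real.sin y ^ 2 := by
        have h := Real.sin_gt_sub_cube hy
        nlinarith
      have : pFun y ≤ y ^ 3 / (y ^ 2 / 2) := by
        apply div_le_div₀ (by positivity) (by linarith) (by positivity) hden
      calc pFun y ≤ y ^ 3 / (y ^ 2 / 2) := this
        _ = 2 * y := by field_simp
  have hev : ∀ᶠ y in nhdsWithin (0:ℝ) (Set.Ioi 0), 0 ≤ pFun y ∧ pFun y ≤ 2 * y := by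
    filter_upwards [self_mem_nhdsWithin,
      Ioo_mem_nhdsGT_of_mem (by norm_num : (0:ℝ) ∈ Ico (0:ℝ) (1/2))] with y hy hy'
    exact hb y hy hy'.2
  have h2y : Filter.Tendsto (fun y : ℝ => 2 * y) (nhdsWithin 0 (Set.Ioi 0)) (nhds 0) := by
    have hc : Continuous (fun y : ℝ => 2 * y) := continuous_const.mul continuous_id
    have := hc.tendsto (0:ℝ)
    simpa using this.mono_left nhdsWithin_le_nhds
  refine tendsto_of_tendsto_of_tendsto_of_le_of_le' tendsto_const_nhds h2y ?_ ?_
  · filter_upwards [hev] with y h using h.1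
  · filter_upwards [hev] with y h using h.2

/-- `y / sin y → 1` etc. -/
lemma tendsto_mul_cos_div_sin :
    Filter.Tendsto (fun y : ℝ => y * Real.cos y / Real.sin y)
      (nhdsWithin 0 (Set.Ioi 0)) (nhds 1) := by
  have hslope : Filter.Tendsto (fun y : ℝ => Real.sin y / y) (nhdsWithin 0 {(0:ℝ)}ᶜ)
      (nhds 1) := by
    have h := (hasDerivAt_iff_tendsto_slope).1 (Real.hasDerivAt_sin 0)
    simp only [Real.cos_zero] at h
    refine h.congr' ?_
    filter_upwards [self_mem_nhdsWithin] with y hy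
    simp [slope, Real.sin_zero, div_eq_inv_mul]
  have hinv : Filter.Tendsto (fun y : ℝ => (Real.sin y / y)⁻¹)
      (nhdsWithin 0 {(0:ℝ)}ᶜ) (nhds 1) := by
    simpa using hslope.inv₀ one_ne_zero
  have h1 : Filter.Tendsto (fun y : ℝ => y / Real.sin y)
      (nhdsWithin 0 {(0:ℝ)}ᶜ) (nhds 1) := by
    refine hinv.congr ?_
    intro y; rw [inv_div]
  have hcos : Filter.Tendsto Real.cos (nhdsWithin (0:ℝ) {(0:ℝ)}ᶜ) (nhds 1) := by
    simpa using (Real.continuous_cos.tendsto 0).mono_left nhdsWithin_le_nhds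
  have := h1.mul hcos
  rw [mul_one] at this
  have hmono : nhdsWithin (0:ℝ) (Set.Ioi 0) ≤ nhdsWithin 0 {(0:ℝ)}ᶜ :=
    nhdsWithin_mono 0 (fun x hx => ne_of_gt hx)
  refine (this.mono_left hmono).congr ?_
  intro y; ring

/-- The antiderivative, patched at `0`. -/
noncomputable def Ffun (y : ℝ) : ℝ :=
  if y = 0 then -1 else -(y * Real.cos y / Real.sin y)

lemma Ffun_hasDerivAt {y : ℝ} (hy : y ≠ 0) (hs : Real.sin y ≠ 0) :
    HasDerivAt Ffun (pFun y) y := by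
  have hg : HasDerivAt (fun x => -(x * Real.cos x / Real.sin x))
      (-(((1 * Real.cos y + y * -Real.sin y) * Real.sin y -
        y * Real.cos y * Real.cos y) / Real.sin y ^ 2)) y := by
    exact (((hasDerivAt_id y).mul (Real.hasDerivAt_cos y)).div
      (Real.hasDerivAt_sin y) hs).neg
  have heq : (-(((1 * Real.cos y + y * -Real.sin y) * Real.sin y -
      y * Real.cos y * Real.cos y) / Real.sin y ^ 2)) = pFun y := by
    unfold pFun
    have pyth := Real.sin_sq_add_cos_sq y
    field_simp
    linear_combination y * pyth
  rw [heq] at hg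
  refine hg.congr_of_eventuallyEq ?_
  filter_upwards [isOpen_ne.mem_nhds hy] with x hx
  simp [Ffun, hx]

/-- (i) `-3 < p'(y) ≤ 2` on `(0, π/2]`; (ii) `p(y) → 0` as `y → 0⁺`;
(iii) `∫_0^{π/2} p(y) dy = 1`. -/
theorem pFun_properties :
    (∀ y : ℝ, 0 < y → y ≤ Real.pi / 2 → -3 < deriv pFun y ∧ deriv pFun y ≤ 2) ∧
    Filter.Tendsto pFun (nhdsWithin 0 (Set.Ioi 0)) (nhds 0) ∧
    ∫ y in (0 : ℝ)..(Real.pi / 2), pFun y = 1 := by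
  have hπ : 0 < Real.pi / 2 := by positivity
  refine ⟨?_, pFun_tendsto_zero, ?_⟩
  · -- part (i)
    intro y hy hy2
    obtain ⟨hs, hc, hcy, hsc⟩ := pFun_basic hy hy2
    have hd := (pFun_hasDerivAt hs.ne').deriv
    rw [hd]
    set s := Real.sin y
    set c := Real.cos y
    have hnum_le : 2 * s ^ 2 * s ^ 2 - (y - s * c) * (2 * s * c) ≤ 2 * ((s^2)^2) := by
      nlinarith [mul_nonneg (mul_nonneg hs.le hc) (sub_nonneg.2 hsc)]
    have hnum_ge : 0 ≤ 2 * s ^ 2 * s ^ 2 - (y - s * c) * (2 * s * c) := by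
      have pyth : s ^ 2 + c ^ 2 = 1 := Real.sin_sq_add_cos_sq y
      have hcube : s * s ^ 2 = s - s * c ^ 2 := by linear_combination s * pyth
      have h1 : (y - s * c) * c ≤ s * s ^ 2 := by nlinarith
      nlinarith [mul_le_mul_of_nonneg_left h1 (by positivity : (0:ℝ) ≤ 2 * s)]
    have hden : (0:ℝ) < (s ^ 2) ^ 2 := by positivity
    constructor
    · have : (0:ℝ) ≤ (2 * s ^ 2 * s ^ 2 - (y - s * c) * (2 * s * c)) / (s ^ 2) ^ 2 :=
        div_nonneg hnum_ge hden.le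
      linarith
    · rw [div_le_iff₀ hden]; linarith
  · -- part (iii)
    have hcont_pFun : ContinuousOn pFun (Icc 0 (Real.pi / 2)) := by
      intro x hx
      rcases eq_or_lt_of_le hx.1 with h0 | h0
      · -- x = 0
        subst h0
        have h1 : Filter.Tendsto pFun (𝓝[Icc (0:ℝ) (Real.pi/2)] 0) (𝓝 (pFun 0)) := by
          have hsub : Icc (0:ℝ) (Real.pi/2) ⊆ insert 0 (Ioi 0) := by
            intro z hz
            rcases eq_or_lt_of_le hz.1 with h | h
            · exact Or.inl h.symm
            · exact Or.inr h
          refine Filter.Tendsto.mono_left ?_ (nhdsWithin_mono _ hsub)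
          rw [nhdsWithin_insert]
          refine Filter.Tendsto.sup ?_ ?_
          · exact tendsto_pure_nhds pFun 0
          · have h0 : pFun 0 = 0 := by simp [pFun]
            rw [h0]; exact pFun_tendsto_zero
        exact h1
      · -- x > 0
        have hxπ : x < Real.pi := lt_of_le_of_lt hx.2 (by linarith [Real.pi_pos])
        have hs : Real.sin x ≠ 0 := (Real.sin_pos_of_pos_of_lt_pi h0 hxπ).ne'
        exact ((continuousAt_id.sub (Real.continuous_sin.continuousAt.mul
          Real.continuous_cos.continuousAt)).div
          ((Real.continuous_sin.continuousAt).pow 2) (pow_ne_zero 2 hs)).continuousWithinAt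
    have hint : IntervalIntegrable pFun MeasureTheory.volume 0 (Real.pi / 2) := by
      apply hcont_pFun.intervalIntegrable_of_Icc hπ.le
    have hcont_F : ContinuousOn Ffun (Icc 0 (Real.pi / 2)) := by
      intro x hx
      rcases eq_or_lt_of_le hx.1 with h0 | h0
      · subst h0
        have h1 : Filter.Tendsto Ffun (𝓝[Icc (0:ℝ) (Real.pi/2)] 0) (𝓝 (Ffun 0)) := by
          have hsub : Icc (0:ℝ) (Real.pi/2) ⊆ insert 0 (Ioi 0) := by
            intro z hz
            rcases eq_or_lt_of_le hz.1 with h | h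
            · exact Or.inl h.symm
            · exact Or.inr h
          refine Filter.Tendsto.mono_left ?_ (nhdsWithin_mono _ hsub)
          rw [nhdsWithin_insert]
          refine Filter.Tendsto.sup ?_ ?_
          · exact tendsto_pure_nhds Ffun 0
          · have hF0 : Ffun 0 = -1 := by norm_num [Ffun]
            rw [hF0]
            have : Filter.Tendsto (fun y => -(y * Real.cos y / Real.sin y))
                (nhdsWithin 0 (Set.Ioi 0)) (𝓝 (-1 : ℝ)) := by
              simpa using tendsto_mul_cos_div_sin.neg
            refine this.congr' ?_
            filter_upwards [self_mem_nhdsWithin] with y hy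
            simp [Ffun, (ne_of_gt (Set.mem_Ioi.mp hy))]
        exact h1
      · have hxπ : x < Real.pi := lt_of_le_of_lt hx.2 (by linarith [Real.pi_pos])
        have hs : Real.sin x ≠ 0 := (Real.sin_pos_of_pos_of_lt_pi h0 hxπ).ne'
        exact ((Ffun_hasDerivAt h0.ne' hs).continuousAt).continuousWithinAt
    have hftc := intervalIntegral.integral_eq_sub_of_hasDeriv_right_of_le hπ.le hcont_F
      (fun x hx => by
        have hxπ : x < Real.pi := lt_of_lt_of_le hx.2 (by linarith [Real.pi_pos])
        have hs : Real.sin x ≠ 0 := (Real.sin_pos_of_pos_of_lt_pi hx.1 hxπ).ne'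
        exact (Ffun_hasDerivAt hx.1.ne' hs).hasDerivWithinAt) hint
    rw [hftc]
    have h1 : Ffun (Real.pi / 2) = 0 := by
      simp [Ffun, hπ.ne', Real.cos_pi_div_two]
    have h2 : Ffun 0 = -1 := by simp [Ffun]
    rw [h1, h2]; ring
end
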